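/- Let L be a finite enumerable lattice with λ := tp(L), let μ be a partition, let C ⊆ L_μ be a constant type code with minimum distance D(C) ≥ D, and let r := ⌊(D−1)/2⌋. If φ is a partition such that |S(u,r,φ)| > 0 for some (equivalently, every) u ∈ L_μ, then |C| ≤ α(λ,φ) / |S(u,r,φ)|. -/

import Mathlib

/-- The height of an element: the greatest length of chains from `⊥` to `u`. -/
noncomputable def ht {L : Type*} [Preorder L] (u : L) : ℕ := (Order.height u).toNat

/-- An element `z` is a cycle if the interval `[⊥, z]` is a chain. -/
def IsCycle {L : Type*} [Lattice L] [BoundedOrder L] (z : L) : Prop :=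
  IsChain (· ≤ ·) (Set.Icc (⊥ : L) z)

/-- An element `z` is a dual cycle if the interval `[z, ⊤]` is a chain. -/
def IsDualCycle {L : Type*} [Lattice L] [BoundedOrder L] (z : L) : Prop :=
  IsChain (· ≤ ·) (Set.Icc z (⊤ : L))

/-- A lattice is semi-primary if every element is a join of cycles and a meet of
dual cycles. -/
def IsSemiPrimary (L : Type*) [Lattice L] [BoundedOrder L] : Prop :=
  ∀ u : L, (∃ s : Finset L, (∀ z ∈ s, IsCycle z) ∧ u = s.sup id) ∧
           (∃ s : Finset L, (∀ z ∈ s, IsDualCycle z) ∧ u = s.inf id)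

/-- A finite family of lattice elements is independent. -/
def IndepFun {L : Type*} [Lattice L] [BoundedOrder L] {n : ℕ} (z : Fin n → L) : Prop :=
  ∀ i, ((Finset.univ.erase i).sup z) ⊓ z i = ⊥

/-- A partition is (represented by) a multiset of positive natural numbers. -/
def IsPartition (μ : Multiset ℕ) : Prop := ∀ p ∈ μ, 0 < p

/-- The `i`-th largest part of a partition (0-indexed, 0 if out of range). -/
def partGet (μ : Multiset ℕ) (i : ℕ) : ℕ := ((μ.sort (· ≤ ·)).reverse).getD i 0

/-- Componentwise order on partitions: `μ ≤ λ` iff `μᵢ ≤ λᵢ` for all `i`. -/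
def PartLE (μ lam : Multiset ℕ) : Prop := ∀ i, partGet μ i ≤ partGet lam i

/-- For `λ = (sⁿ)` and `μ ≤ λ`, the partition `λ − μ = (s − μₙ, …, s − μ₁)`. -/
def partSub (s n : ℕ) (μ : Multiset ℕ) : Multiset ℕ :=
  Multiset.filter (fun x => 0 < x)
    (↑((List.range n).map (fun i => s - partGet μ i)) : Multiset ℕ)

/-- `u` has type `μ`: `u` is a join of independent nonzero cycles whose multiset of
heights equals `μ`. -/
def IsTypeOf {L : Type*} [Lattice L] [BoundedOrder L] (u : L) (μ : Multiset ℕ) : Prop :=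
  ∃ (n : ℕ) (z : Fin n → L), (∀ i, IsCycle (z i)) ∧ (∀ i, z i ≠ ⊥) ∧ IndepFun z ∧
    u = Finset.univ.sup z ∧ (↑(List.ofFn (fun i => ht (z i))) : Multiset ℕ) = μ

/-- The lattice metric `d(u,v) = h(u ∨ v) − h(u ∧ v)`. -/
noncomputable def dLat {L : Type*} [Lattice L] (u v : L) : ℕ := ht (u ⊔ v) - ht (u ⊓ v)

/-- The sphere of radius `r` centered at `u`. -/
def sph {L : Type*} [Lattice L] (u : L) (r : ℕ) : Set L := {v | dLat u v ≤ r}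

/-- The `t`-th layer of the sphere of radius `r` centered at `u`. -/
def sphH {L : Type*} [Lattice L] (u : L) (r t : ℕ) : Set L :=
  {v | dLat u v ≤ r ∧ ht v = t}

/-- The elements of type `μ` in the sphere of radius `r` centered at `u`. -/
def sphT {L : Type*} [Lattice L] [BoundedOrder L] (u : L) (r : ℕ) (μ : Multiset ℕ) :
    Set L := {v | dLat u v ≤ r ∧ IsTypeOf v μ}

/-- A finite semi-primary lattice is down-enumerable. -/
def DownEnum (L : Type*) [Lattice L] [BoundedOrder L] : Prop :=
  ∀ (u v : L) (φ μ : Multiset ℕ), IsTypeOf u φ → IsTypeOf v φ →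
    Nat.card {w : L // IsTypeOf w μ ∧ w ≤ u} = Nat.card {w : L // IsTypeOf w μ ∧ w ≤ v}

/-- A finite semi-primary lattice is up-enumerable. -/
def UpEnum (L : Type*) [Lattice L] [BoundedOrder L] : Prop :=
  ∀ (u v : L) (φ μ : Multiset ℕ), IsTypeOf u φ → IsTypeOf v φ →
    Nat.card {w : L // IsTypeOf w μ ∧ u ≤ w} = Nat.card {w : L // IsTypeOf w μ ∧ v ≤ w}

/-- A lattice is enumerable if it is both down- and up-enumerable. -/
def Enumerable (L : Type*) [Lattice L] [BoundedOrder L] : Prop := DownEnum L ∧ UpEnum L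

/-- `α(φ,μ)`: the number of elements of type `μ` below a (any) element of type `φ`. -/
noncomputable def alphaP (L : Type*) [Lattice L] [BoundedOrder L] (φ μ : Multiset ℕ) : ℕ :=
  sSup {n | ∃ u : L, IsTypeOf u φ ∧ n = Nat.card {w : L // IsTypeOf w μ ∧ w ≤ u}}

/-- `β(φ,μ)`: the number of elements of type `μ` above a (any) element of type `φ`. -/
noncomputable def betaP (L : Type*) [Lattice L] [BoundedOrder L] (φ μ : Multiset ℕ) : ℕ :=
  sSup {n | ∃ u : L, IsTypeOf u φ ∧ n = Nat.card {w : L // IsTypeOf w μ ∧ u ≤ w}}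

/-- `α(μ, r₁, …, rₙ)`: the number of chains `x₁ ≤ ⋯ ≤ xₙ ≤ w` with `h(xᵢ) = rᵢ`,
below a (any) element `w` of type `μ`. -/
noncomputable def alphaChain (L : Type*) [Lattice L] [BoundedOrder L] (μ : Multiset ℕ)
    {n : ℕ} (r : Fin n → ℕ) : ℕ :=
  sSup {m | ∃ w : L, IsTypeOf w μ ∧
    m = Nat.card {x : Fin n → L // (∀ i, ht (x i) = r i) ∧ Monotone x ∧ ∀ i, x i ≤ w}}


set_option linter.unusedSectionVars false

section Basics
attribute [local instance] Classical.propDecidable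

variable {L : Type*} [Lattice L] [BoundedOrder L] [Fintype L]

lemma height_ne_top (x : L) : Order.height x ≠ ⊤ := by
  have h : Order.height x ≤ (Fintype.card L : ℕ∞) := by
    apply Order.height_le
    intro p _
    have h2 : p.length + 1 ≤ Fintype.card L := by
      simpa using Fintype.card_le_of_injective p.toFun p.strictMono.injective
    exact_mod_cast Nat.le_of_succ_le h2
  exact ne_top_of_le_ne_top (by simp) h

lemma height_lt_top (x : L) : Order.height x < ⊤ :=
  lt_of_le_of_ne le_top (height_ne_top x)

lemma ht_coe (x : L) : (ht x : ℕ∞) = Order.height x := by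
  simp [ht, ENat.coe_toNat (height_ne_top x)]

lemma ht_mono {x y : L} (h : x ≤ y) : ht x ≤ ht y := by
  have := Order.height_mono h
  rw [← ht_coe, ← ht_coe] at this
  exact_mod_cast this

lemma ht_strictMono {x y : L} (h : x < y) : ht x < ht y := by
  have := Order.height_strictMono h (height_lt_top x)
  rw [← ht_coe, ← ht_coe] at this
  exact_mod_cast this

lemma ht_bot : ht (⊥ : L) = 0 := by simp [ht]

lemma eq_of_le_of_ht_le {x y : L} (h : x ≤ y) (h2 : ht y ≤ ht x) : x = y := by
  rcases lt_or_eq_of_le h with h' | h'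
  · exact absurd (ht_strictMono h') (by omega)
  · exact h'

lemma exists_covBy_of_lt' {x y : L} (h : x < y) : ∃ t, x ⋖ t ∧ t ≤ y := by
  have hwf : WellFounded ((· < ·) : L → L → Prop) := wellFounded_lt
  obtain ⟨m, hm, hmin⟩ := hwf.has_min {t | x < t ∧ t ≤ y} ⟨y, h, le_rfl⟩
  refine ⟨m, ⟨hm.1, fun z hz1 hz2 => ?_⟩, hm.2⟩
  exact hmin z ⟨hz1, le_trans hz2.le hm.2⟩ hz2

lemma exists_le_covBy_of_lt' {x y : L} (h : x < y) : ∃ t, x ≤ t ∧ t ⋖ y := by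
  have hwf : WellFounded ((· > ·) : L → L → Prop) := wellFounded_gt
  obtain ⟨m, hm, hmax⟩ := hwf.has_min {t | x ≤ t ∧ t < y} ⟨x, le_rfl, h⟩
  refine ⟨m, hm.1, ⟨hm.2, fun z hz1 hz2 => ?_⟩⟩
  exact hmax z ⟨le_trans hm.1 hz1.le, hz2⟩ hz1

end Basics

section Modular
attribute [local instance] Classical.propDecidable

variable {L : Type*} [Lattice L] [IsModularLattice L] [BoundedOrder L] [Fintype L]

lemma covBy_sup_or (c : L) {x y : L} (h : x ⋖ y) : x ⊔ c = y ⊔ c ∨ (x ⊔ c) ⋖ (y ⊔ c) := by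
  have hle1 : x ≤ y ⊓ (x ⊔ c) := le_inf h.le le_sup_left
  have hle2 : y ⊓ (x ⊔ c) ≤ y := inf_le_left
  rcases h.eq_or_eq hle1 hle2 with heq | heq
  · right
    have hcov : y ⊓ (x ⊔ c) ⋖ y := by rw [heq]; exact h
    have h2 := covBy_sup_of_inf_covBy_left (a := y) (b := x ⊔ c) hcov
    have hsup : y ⊔ (x ⊔ c) = y ⊔ c := by
      rw [← sup_assoc, sup_eq_left.mpr h.le]
    rwa [hsup] at h2
  · left
    have hy : y ≤ x ⊔ c := by rw [← heq]; exact inf_le_right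
    exact le_antisymm (sup_le_sup_right h.le c) (sup_le hy le_sup_right)

lemma covBy_inf_or (c : L) {x y : L} (h : x ⋖ y) : x ⊓ c = y ⊓ c ∨ (x ⊓ c) ⋖ (y ⊓ c) := by
  have hle1 : x ≤ x ⊔ (y ⊓ c) := le_sup_left
  have hle2 : x ⊔ (y ⊓ c) ≤ y := sup_le h.le inf_le_left
  rcases h.eq_or_eq hle1 hle2 with heq | heq
  · left
    have hyc : y ⊓ c ≤ x := by rw [← heq]; exact le_sup_right
    exact le_antisymm (inf_le_inf_right c h.le)
      (le_inf (le_trans (le_inf hyc inf_le_right) inf_le_left) inf_le_right)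
  · right
    have hcov : x ⋖ x ⊔ (y ⊓ c) := by rw [heq]; exact h
    have h2 := inf_covBy_of_covBy_sup_left (a := x) (b := y ⊓ c) hcov
    have hinf : x ⊓ (y ⊓ c) = x ⊓ c := by
      rw [← inf_assoc, inf_eq_left.mpr h.le]
    rwa [hinf] at h2

lemma height_covBy_le : ∀ y x : L, x ⋖ y → Order.height y ≤ Order.height x + 1 := by
  intro y
  induction y using WellFoundedLT.induction with
  | ind y IH =>
    intro x hxy
    rw [Order.height_eq_iSup_lt_height y]
    apply iSup₂_le
    intro z hz
    have hzx : Order.height z ≤ Order.height x := by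
      by_cases hle : z ≤ x
      · exact Order.height_mono hle
      · have hxz : x < x ⊔ z :=
          lt_of_le_of_ne le_sup_left (fun heq => hle (le_sup_right.trans heq.symm.le))
        have hsup : x ⊔ z = y := by
          rcases hxy.eq_or_eq le_sup_left (sup_le hxy.le hz.le) with h | h
          · exact absurd (le_sup_right.trans h.le) hle
          · exact h
        have hcov : x ⋖ x ⊔ z := by rw [hsup]; exact hxy
        have hcov2 : x ⊓ z ⋖ z := inf_covBy_of_covBy_sup_left hcov
        have hlt : x ⊓ z < x := by
          rcases lt_or_eq_of_le (inf_le_left : x ⊓ z ≤ x) with h | h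
          · exact h
          · exfalso
            have hxlez : x ≤ z := by rw [← h]; exact inf_le_right
            rw [sup_eq_right.mpr hxlez] at hsup
            exact hz.ne hsup
        have h1 : Order.height z ≤ Order.height (x ⊓ z) + 1 := IH z hz (x ⊓ z) hcov2
        have h2 : Order.height (x ⊓ z) + 1 ≤ Order.height x :=
          (ENat.add_one_le_iff (height_ne_top _)).mpr (Order.height_strictMono hlt (height_lt_top _))
        exact h1.trans h2
    exact add_le_add hzx le_rfl

lemma ht_covBy {x y : L} (h : x ⋖ y) : ht y = ht x + 1 := by
  have h1 : ht x < ht y := ht_strictMono h.lt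
  have h2 : Order.height y ≤ Order.height x + 1 := height_covBy_le y x h
  rw [← ht_coe, ← ht_coe] at h2
  have h2' : ht y ≤ ht x + 1 := by exact_mod_cast h2
  omega

private lemma walk_sup_aux (c : L) : ∀ n (x y : L), x ≤ y → ht y ≤ ht x + n →
    ht (c ⊔ y) + ht x ≤ ht (c ⊔ x) + ht y := by
  intro n
  induction n with
  | zero =>
    intro x y hxy hn
    have : x = y := eq_of_le_of_ht_le hxy (by omega)
    subst this; omega
  | succ n IH =>
    intro x y hxy hn
    rcases eq_or_lt_of_le hxy with heq | hlt
    · subst heq; omega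
    · obtain ⟨t, hcov, hty⟩ := exists_covBy_of_lt' hlt
      have hht : ht t = ht x + 1 := ht_covBy hcov
      have h1 : ht (c ⊔ y) + ht t ≤ ht (c ⊔ t) + ht y := IH t y hty (by omega)
      have h2 : ht (c ⊔ t) ≤ ht (c ⊔ x) + 1 := by
        rcases covBy_sup_or c hcov with h | h
        · rw [sup_comm c t, ← h, sup_comm x c]; omega
        · have h3 := ht_covBy h
          rw [sup_comm c t, sup_comm c x]; omega
      omega

private lemma walk_inf_aux (c : L) : ∀ n (x y : L), x ≤ y → ht y ≤ ht x + n →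
    ht (c ⊓ y) + ht x ≤ ht (c ⊓ x) + ht y := by
  intro n
  induction n with
  | zero =>
    intro x y hxy hn
    have : x = y := eq_of_le_of_ht_le hxy (by omega)
    subst this; omega
  | succ n IH =>
    intro x y hxy hn
    rcases eq_or_lt_of_le hxy with heq | hlt
    · subst heq; omega
    · obtain ⟨t, hcov, hty⟩ := exists_covBy_of_lt' hlt
      have hht : ht t = ht x + 1 := ht_covBy hcov
      have h1 : ht (c ⊓ y) + ht t ≤ ht (c ⊓ t) + ht y := IH t y hty (by omega)
      have h2 : ht (c ⊓ t) ≤ ht (c ⊓ x) + 1 := by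
        rcases covBy_inf_or c hcov with h | h
        · rw [inf_comm c t, ← h, inf_comm x c]; omega
        · have h3 := ht_covBy h
          rw [inf_comm c t, inf_comm c x]; omega
      omega

/-- modular height equality -/
lemma ht_modular (a b : L) : ht (a ⊔ b) + ht (a ⊓ b) = ht a + ht b := by
  have h1 : ht (b ⊔ a) + ht (a ⊓ b) ≤ ht (b ⊔ (a ⊓ b)) + ht a :=
    walk_sup_aux b (ht a) (a ⊓ b) a inf_le_left (by omega)
  have e1 : b ⊔ (a ⊓ b) = b := sup_eq_left.mpr inf_le_right
  have h2 : ht (a ⊓ (a ⊔ b)) + ht b ≤ ht (a ⊓ b) + ht (a ⊔ b) :=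
    walk_inf_aux a (ht (a ⊔ b)) b (a ⊔ b) le_sup_right (by omega)
  have e2 : a ⊓ (a ⊔ b) = a := inf_eq_left.mpr le_sup_left
  rw [e1] at h1
  rw [e2] at h2
  rw [sup_comm b a] at h1
  omega

lemma ht_inf_le_ht_sup (a b : L) : ht (a ⊓ b) ≤ ht (a ⊔ b) :=
  ht_mono (le_trans inf_le_left le_sup_left)

lemma dLat_comm (u v : L) : dLat u v = dLat v u := by
  rw [dLat, dLat, sup_comm, inf_comm]

lemma dLat_self (u : L) : dLat u u = 0 := by simp [dLat]

lemma eq_of_dLat_eq_zero {u v : L} (h : dLat u v = 0) : u = v := by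
  have hle : u ⊓ v ≤ u ⊔ v := le_trans inf_le_left le_sup_left
  have h2 : ht (u ⊔ v) ≤ ht (u ⊓ v) := by
    have := ht_inf_le_ht_sup u v
    simp only [dLat] at h
    omega
  have heq : u ⊓ v = u ⊔ v := eq_of_le_of_ht_le hle h2
  have h3 : u ≤ v := le_trans (le_trans le_sup_left heq.symm.le) inf_le_right
  have h4 : v ≤ u := le_trans (le_trans le_sup_right heq.symm.le) inf_le_left
  exact le_antisymm h3 h4

lemma dLat_triangle (u v w : L) : dLat u w ≤ dLat u v + dLat v w := by
  have k1 : ht (u ⊔ w) + ht v ≤ ht (u ⊔ v) + ht (v ⊔ w) := by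
    have hA := ht_modular (u ⊔ v) (v ⊔ w)
    have hm1 : ht (u ⊔ w) ≤ ht ((u ⊔ v) ⊔ (v ⊔ w)) :=
      ht_mono (sup_le (le_trans le_sup_left le_sup_left) (le_trans le_sup_right le_sup_right))
    have hm2 : ht v ≤ ht ((u ⊔ v) ⊓ (v ⊔ w)) := ht_mono (le_inf le_sup_right le_sup_left)
    omega
  have k2 : ht (u ⊓ v) + ht (v ⊓ w) ≤ ht (u ⊓ w) + ht v := by
    have hA := ht_modular (u ⊓ v) (v ⊓ w)
    have hm1 : ht ((u ⊓ v) ⊔ (v ⊓ w)) ≤ ht v :=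
      ht_mono (sup_le inf_le_right inf_le_left)
    have hm2 : ht ((u ⊓ v) ⊓ (v ⊓ w)) ≤ ht (u ⊓ w) :=
      ht_mono (le_inf (le_trans inf_le_left inf_le_left) (le_trans inf_le_right inf_le_right))
    omega
  have m1 := ht_inf_le_ht_sup u v
  have m2 := ht_inf_le_ht_sup v w
  have m3 := ht_inf_le_ht_sup u w
  simp only [dLat]
  omega

end Modular

section Cycles
attribute [local instance] Classical.propDecidable
set_option linter.unusedSectionVars false

variable {L : Type*} [Lattice L] [IsModularLattice L] [BoundedOrder L] [Fintype L]

lemma isCycle_bot : IsCycle (⊥ : L) := by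
  have : Set.Icc (⊥ : L) ⊥ = {⊥} := by simp
  rw [IsCycle, this]
  exact Set.Subsingleton.isChain (Set.subsingleton_singleton)

lemma isCycle_of_le {z x : L} (hz : IsCycle z) (hx : x ≤ z) : IsCycle x :=
  IsChain.mono (Set.Icc_subset_Icc le_rfl hx) hz

lemma cycle_comparable {z q q' : L} (hz : IsCycle z) (h1 : q ≤ z) (h2 : q' ≤ z) :
    q ≤ q' ∨ q' ≤ q := by
  by_cases heq : q = q'
  · left; exact heq.le
  · exact hz ⟨bot_le, h1⟩ ⟨bot_le, h2⟩ heq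

lemma cycle_atom {z : L} (hz : IsCycle z) (hzne : z ≠ ⊥) :
    ∃ a, a ≤ z ∧ a ≠ ⊥ ∧ ∀ q, q ≤ z → q ≠ ⊥ → a ≤ q := by
  have hwf : WellFounded ((· < ·) : L → L → Prop) := wellFounded_lt
  obtain ⟨a, ha, hmin⟩ := hwf.has_min {x | x ≠ ⊥ ∧ x ≤ z} ⟨z, hzne, le_rfl⟩
  refine ⟨a, ha.2, ha.1, fun q hq hqne => ?_⟩
  rcases cycle_comparable hz hq ha.2 with h | h
  · rcases lt_or_eq_of_le h with h' | h'
    · exact absurd h' (hmin q ⟨hqne, hq⟩)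
    · exact h'.symm.le
  · exact h

lemma exists_cycle_not_le (hsp : IsSemiPrimary L) {u v : L} (h : ¬ u ≤ v) :
    ∃ c, IsCycle c ∧ c ≤ u ∧ ¬ c ≤ v := by
  obtain ⟨s, hs, hsup⟩ := (hsp u).1
  by_contra hc
  push_neg at hc
  apply h
  rw [hsup]
  apply Finset.sup_le
  intro z hzs
  exact hc z (hs z hzs) (by rw [hsup]; exact Finset.le_sup (f := id) hzs)

lemma exists_max_cycle (u : L) :
    ∃ z, IsCycle z ∧ z ≤ u ∧ ∀ c, IsCycle c → c ≤ u → ht c ≤ ht z := by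
  obtain ⟨z, hz, hmax⟩ := Finset.exists_max_image
    (Finset.univ.filter (fun z : L => IsCycle z ∧ z ≤ u)) ht
    ⟨⊥, by simp [isCycle_bot]⟩
  simp only [Finset.mem_filter, Finset.mem_univ, true_and] at hz hmax
  exact ⟨z, hz.1, hz.2, fun c hc hcu => hmax c ⟨hc, hcu⟩⟩

lemma chain_transfer {α : Type*} [PartialOrder α] {S T : Set α} (e : ↥S ≃o ↥T)
    (h : IsChain (· ≤ ·) S) : IsChain (· ≤ ·) T := by
  intro x hx y hy hne
  have hab : ((e.symm ⟨x, hx⟩ : ↥S) : α) ≠ ((e.symm ⟨y, hy⟩ : ↥S) : α) := by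
    intro hh
    apply hne
    have h2 : e.symm ⟨x, hx⟩ = e.symm ⟨y, hy⟩ := Subtype.ext hh
    have h3 := congrArg e h2
    simp only [OrderIso.apply_symm_apply] at h3
    exact congrArg Subtype.val h3
  rcases h (e.symm ⟨x, hx⟩).2 (e.symm ⟨y, hy⟩).2 hab with hle | hle
  · left
    have h2 : e.symm ⟨x, hx⟩ ≤ e.symm ⟨y, hy⟩ := hle
    have h3 := e.symm.le_iff_le.mp h2
    exact h3
  · right
    have h2 : e.symm ⟨y, hy⟩ ≤ e.symm ⟨x, hx⟩ := hle
    have h3 := e.symm.le_iff_le.mp h2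
    exact h3

end Cycles

section TypeHeight
attribute [local instance] Classical.propDecidable
set_option linter.unusedSectionVars false

variable {L : Type*} [Lattice L] [IsModularLattice L] [BoundedOrder L] [Fintype L]

lemma isTypeOf_bot : IsTypeOf (⊥ : L) 0 := by
  refine ⟨0, (fun i => ⊥), fun i => i.elim0, fun i => i.elim0, fun i => i.elim0, ?_, ?_⟩
  · simp
  · simp [List.ofFn_zero]

lemma indepFun_comp_succ {n : ℕ} {z : Fin (n + 1) → L} (h : IndepFun z) :
    IndepFun (z ∘ Fin.succ) := by
  intro i
  have hle : (Finset.univ.erase i).sup (z ∘ Fin.succ) ≤ (Finset.univ.erase i.succ).sup z := by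
    apply Finset.sup_le
    intro j hj
    have hj' : j ≠ i := (Finset.mem_erase.mp hj).1
    exact Finset.le_sup (Finset.mem_erase.mpr ⟨fun hh => hj' (Fin.succ_injective _ hh),
      Finset.mem_univ _⟩)
  have := h i.succ
  exact le_antisymm (le_trans (inf_le_inf_right _ hle) this.le) bot_le

lemma sup_univ_fin_succ {n : ℕ} (z : Fin (n + 1) → L) :
    Finset.univ.sup z = z 0 ⊔ Finset.univ.sup (z ∘ Fin.succ) := by
  rw [Fin.univ_succ, Finset.sup_cons, Finset.sup_map]
  rfl

lemma indep_sup_ht : ∀ {n : ℕ} (z : Fin n → L), IndepFun z →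
    ht (Finset.univ.sup z) = ∑ i, ht (z i) := by
  intro n
  induction n with
  | zero => intro z _; simp [ht_bot]
  | succ n IH =>
    intro z hz
    have hsup := sup_univ_fin_succ z
    have hS : Finset.univ.sup (z ∘ Fin.succ) ≤ (Finset.univ.erase (0 : Fin (n+1))).sup z := by
      apply Finset.sup_le
      intro j _
      exact Finset.le_sup (Finset.mem_erase.mpr ⟨Fin.succ_ne_zero j, Finset.mem_univ _⟩)
    have hdisj : z 0 ⊓ Finset.univ.sup (z ∘ Fin.succ) = ⊥ := by
      have h0 := hz 0
      rw [inf_comm]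
      exact le_antisymm (le_trans (inf_le_inf_right _ hS) h0.le) bot_le
    have hA := ht_modular (z 0) (Finset.univ.sup (z ∘ Fin.succ))
    rw [hdisj, ht_bot] at hA
    have hIH := IH (z ∘ Fin.succ) (indepFun_comp_succ hz)
    simp only [Function.comp_apply] at hIH
    rw [hsup, Fin.sum_univ_succ, ← hIH]
    omega


lemma ht_of_isTypeOf {u : L} {μ : Multiset ℕ} (h : IsTypeOf u μ) : ht u = μ.sum := by
  obtain ⟨n, z, _, _, hindep, hsup, hμ⟩ := h
  rw [hsup, indep_sup_ht z hindep, ← hμ]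
  rw [Multiset.sum_coe, List.sum_ofFn]

/-- merging a disjoint cycle into a typed element -/
lemma mergeType {z w : L} {μ : Multiset ℕ} (hz : IsCycle z) (hzne : z ≠ ⊥)
    (hw : IsTypeOf w μ) (hdisj : z ⊓ w = ⊥) : IsTypeOf (z ⊔ w) (ht z ::ₘ μ) := by
  obtain ⟨n, zs, hcyc, hne, hindep, hsup, hμ⟩ := hw
  refine ⟨n + 1, Fin.cons z zs, ?_, ?_, ?_, ?_, ?_⟩
  · intro i
    refine Fin.cases ?_ ?_ i
    · simpa using hz
    · intro j; simpa using hcyc j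
  · intro i
    refine Fin.cases ?_ ?_ i
    · simpa using hzne
    · intro j; simpa using hne j
  · intro i
    refine Fin.cases ?_ ?_ i
    · simp only [Fin.cons_zero]
      have hle : (Finset.univ.erase (0 : Fin (n+1))).sup (Fin.cons z zs)
          ≤ Finset.univ.sup zs := by
        apply Finset.sup_le
        intro k hk
        have hk0 : k ≠ 0 := (Finset.mem_erase.mp hk).1
        obtain ⟨j, rfl⟩ := Fin.exists_succ_eq.mpr hk0
        simp only [Fin.cons_succ]
        exact Finset.le_sup (Finset.mem_univ j)
      have h2 : (Finset.univ.erase (0 : Fin (n+1))).sup (Fin.cons z zs) ⊓ z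
          ≤ Finset.univ.sup zs ⊓ z := inf_le_inf_right _ hle
      have h3 : Finset.univ.sup zs ⊓ z = ⊥ := by rw [inf_comm, ← hsup]; exact hdisj
      exact le_antisymm (h3 ▸ h2) bot_le
    · intro j
      simp only [Fin.cons_succ]
      set sj := (Finset.univ.erase j).sup zs with hsj
      have hle : (Finset.univ.erase (Fin.succ j)).sup (Fin.cons z zs) ≤ z ⊔ sj := by
        apply Finset.sup_le
        intro k hk
        have hkj : k ≠ Fin.succ j := (Finset.mem_erase.mp hk).1
        by_cases hk0 : k = 0
        · subst hk0; simp only [Fin.cons_zero]; exact le_sup_left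
        · obtain ⟨j', rfl⟩ := Fin.exists_succ_eq.mpr hk0
          simp only [Fin.cons_succ]
          refine le_trans ?_ le_sup_right
          exact Finset.le_sup (Finset.mem_erase.mpr
            ⟨fun hh => hkj (by rw [hh]), Finset.mem_univ _⟩)
      have hzsj : zs j ≤ Finset.univ.sup zs := Finset.le_sup (Finset.mem_univ j)
      have hsjw : sj ≤ Finset.univ.sup zs :=
        Finset.sup_le (fun k _ => Finset.le_sup (Finset.mem_univ k))
      have hmod : (sj ⊔ z) ⊓ Finset.univ.sup zs = sj ⊔ (z ⊓ Finset.univ.sup zs) :=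
        sup_inf_assoc_of_le z hsjw
      have hzw : z ⊓ Finset.univ.sup zs = ⊥ := by rw [← hsup]; exact hdisj
      have hkey : (z ⊔ sj) ⊓ zs j ≤ ⊥ := by
        have hcalc : (z ⊔ sj) ⊓ zs j = sj ⊓ zs j := by
          calc (z ⊔ sj) ⊓ zs j = (z ⊔ sj) ⊓ (Finset.univ.sup zs ⊓ zs j) := by
                rw [inf_eq_right.mpr hzsj]
            _ = ((z ⊔ sj) ⊓ Finset.univ.sup zs) ⊓ zs j := by rw [inf_assoc]
            _ = sj ⊓ zs j := by rw [sup_comm z sj, hmod, hzw, sup_bot_eq]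
        rw [hcalc, hindep j]
      exact le_antisymm (le_trans (inf_le_inf_right _ hle) hkey) bot_le
  · rw [sup_univ_fin_succ (Fin.cons z zs)]
    have hcomp : (Fin.cons z zs : Fin (n+1) → L) ∘ Fin.succ = zs := by
      funext j
      simp
    rw [hcomp, Fin.cons_zero, ← hsup]
  · have hofn : (List.ofFn fun i => ht ((Fin.cons z zs : Fin (n+1) → L) i))
        = ht z :: List.ofFn (fun i => ht (zs i)) := by
      rw [List.ofFn_succ]
      simp only [Fin.cons_zero, Fin.cons_succ]
    rw [hofn, ← hμ, ← Multiset.cons_coe]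

end TypeHeight

section Decomp
attribute [local instance] Classical.propDecidable
set_option linter.unusedSectionVars false
set_option maxHeartbeats 1000000

variable {L : Type*} [Lattice L] [IsModularLattice L] [BoundedOrder L] [Fintype L]

/-- Key structural lemma: if `v ⋖ u`, `v = z ⊕ w₀` with `z` a maximal-height cycle of `u`,
then there is `t' ≤ u` not below `v` whose part in `v` lies below `w₀`. -/
lemma core_lemma (hsp : IsSemiPrimary L) {u v z w₀ : L} (hvu : v ⋖ u) (hz : IsCycle z)
    (hmax : ∀ c, IsCycle c → c ≤ u → ht c ≤ ht z) (hzw : z ⊓ w₀ = ⊥) (hv : z ⊔ w₀ = v) :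
    ∃ t', t' ≤ u ∧ ¬ t' ≤ v ∧ t' ⊓ v ≤ w₀ := by
  obtain ⟨s, hsd, hw₀⟩ := (hsp w₀).2
  have hw₀v : w₀ ≤ v := by rw [← hv]; exact le_sup_right
  have hvltu : v < u := hvu.lt
  have hsne : s.Nonempty := by
    rcases Finset.eq_empty_or_nonempty s with h | h
    · exfalso
      rw [h] at hw₀
      simp only [Finset.inf_empty] at hw₀
      have : u ≤ v := le_trans le_top (hw₀ ▸ hw₀v)
      exact hvltu.not_ge this
    · exact h
  -- the interval [w₀, v] is a chain
  have e0 := infIccOrderIsoIccSup z w₀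
  rw [hzw, hv] at e0
  have hchain1 : IsChain (· ≤ ·) (Set.Icc w₀ v) := chain_transfer e0 hz
  -- find q₀ ∈ s with v ⊓ q₀ = w₀
  have hq0 : ∃ q ∈ s, v ⊓ q = w₀ := by
    set T := s.image (fun q => v ⊓ q) with hT
    have hTne : T.Nonempty := hsne.image _
    have hTmem : ∀ t ∈ T, t ∈ Set.Icc w₀ v := by
      intro t htm
      obtain ⟨q, hqs, rfl⟩ := Finset.mem_image.mp htm
      refine ⟨le_inf hw₀v ?_, inf_le_left⟩
      rw [hw₀]
      exact Finset.inf_le hqs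
    have hwf : WellFounded ((· < ·) : L → L → Prop) := wellFounded_lt
    obtain ⟨t0, ht0⟩ := hTne
    obtain ⟨m₀, hm₀T, hm₀min⟩ := hwf.has_min {x | x ∈ T} ⟨t0, ht0⟩
    have hm₀T' : m₀ ∈ T := hm₀T
    have hleast : ∀ t ∈ T, m₀ ≤ t := by
      intro t htm
      by_cases hmt : m₀ = t
      · exact hmt.le
      · rcases hchain1 (hTmem m₀ hm₀T') (hTmem t htm) hmt with h | h
        · exact h
        · rcases lt_or_eq_of_le h with h' | h'
          · exact absurd h' (hm₀min t htm)
          · exact h'.ge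
    obtain ⟨q₀, hq₀s, hq₀e⟩ := Finset.mem_image.mp hm₀T'
    refine ⟨q₀, hq₀s, ?_⟩
    have h1 : m₀ ≤ w₀ := by
      rw [hw₀]
      apply Finset.le_inf
      intro q hqs
      exact le_trans (hleast (v ⊓ q) (Finset.mem_image_of_mem _ hqs)) inf_le_right
    have h3 : w₀ ≤ m₀ := (hTmem m₀ hm₀T').1
    rw [hq₀e]
    exact le_antisymm h1 h3
  obtain ⟨q₀, hq₀s, hvq₀⟩ := hq0
  by_cases hq : u ⊓ q₀ ≤ v
  · exfalso
    have huq : u ⊓ q₀ = w₀ := by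
      apply le_antisymm
      · have : u ⊓ q₀ ≤ v ⊓ q₀ := le_inf hq inf_le_right
        rw [hvq₀] at this; exact this
      · exact le_inf (le_trans hw₀v hvltu.le) (by rw [← hvq₀]; exact inf_le_right)
    have e1 := infIccOrderIsoIccSup u q₀
    rw [huq] at e1
    have hchainq : IsChain (· ≤ ·) (Set.Icc q₀ (u ⊔ q₀)) := by
      apply IsChain.mono (Set.Icc_subset_Icc le_rfl le_top)
      exact hsd q₀ hq₀s
    have hchain2 : IsChain (· ≤ ·) (Set.Icc w₀ u) := chain_transfer e1.symm hchainq
    obtain ⟨c, hc, hcu, hcv⟩ := exists_cycle_not_le hsp hvltu.not_ge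
    have hwc_mem : w₀ ⊔ c ∈ Set.Icc w₀ u := ⟨le_sup_left, sup_le (le_trans hw₀v hvltu.le) hcu⟩
    have hv_mem : v ∈ Set.Icc w₀ u := ⟨hw₀v, hvltu.le⟩
    have hcomp : v ≤ w₀ ⊔ c := by
      by_cases heq : w₀ ⊔ c = v
      · exact heq.symm.le
      · rcases hchain2 hwc_mem hv_mem (fun hh => heq hh) with h | h
        · exfalso; exact hcv (le_trans le_sup_right h)
        · exact h
    have hwcu : w₀ ⊔ c = u := by
      rcases hvu.eq_or_eq hcomp (sup_le (le_trans hw₀v hvltu.le) hcu) with h | h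
      · exfalso; exact hcv (le_trans le_sup_right h.le)
      · exact h
    -- height contradiction
    have hA1 := ht_modular w₀ c
    have hA2 := ht_modular z w₀
    rw [hzw, hv, ht_bot] at hA2
    have h3 := ht_covBy hvu
    have h4 : ht c ≤ ht z := hmax c hc hcu
    have h5 : ht (w₀ ⊔ c) = ht u := by rw [hwcu]
    have h6 : 1 ≤ ht z := by
      have hzne : z ≠ ⊥ := by
        intro hzb
        have : ht c = 0 := by have := hmax c hc hcu; rw [hzb, ht_bot] at this; omega
        have hcb : c = ⊥ := by
          have := eq_of_le_of_ht_le (bot_le : (⊥:L) ≤ c) (by rw [ht_bot]; omega)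
          exact this.symm
        exact hcv (hcb.le.trans bot_le)
      have := ht_strictMono (bot_lt_iff_ne_bot.mpr hzne)
      rw [ht_bot] at this; omega
    omega
  · refine ⟨u ⊓ q₀, inf_le_left, hq, ?_⟩
    have : (u ⊓ q₀) ⊓ v = v ⊓ q₀ := by
      rw [inf_right_comm, inf_eq_right.mpr hvltu.le]
    rw [this, hvq₀]

/-- Main decomposition theorem by strong induction on height. -/
theorem decomp_aux (hsp : IsSemiPrimary L) : ∀ n : ℕ, ∀ u : L, ht u ≤ n →
    (∃ μ, IsTypeOf u μ) ∧
    (∀ z, IsCycle z → z ≤ u → (∀ c, IsCycle c → c ≤ u → ht c ≤ ht z) →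
      ∃ w₀, z ⊓ w₀ = ⊥ ∧ z ⊔ w₀ = u) := by
  intro n
  induction n with
  | zero =>
    intro u hu
    have hub : ⊥ = u := eq_of_le_of_ht_le bot_le (by rw [ht_bot]; omega)
    constructor
    · exact ⟨0, hub ▸ isTypeOf_bot⟩
    · intro z hzc hzu _
      refine ⟨⊥, by simp, ?_⟩
      have hz : z = ⊥ := le_antisymm (hub ▸ hzu) bot_le
      rw [hz, ← hub]; simp
  | succ n IH =>
    intro u hu
    have hcompl : ∀ z, IsCycle z → z ≤ u → (∀ c, IsCycle c → c ≤ u → ht c ≤ ht z) →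
        ∃ w₀, z ⊓ w₀ = ⊥ ∧ z ⊔ w₀ = u := by
      intro z hz hzu hmax
      by_cases hzequ : z = u
      · exact ⟨⊥, by simp, by rw [hzequ]; simp⟩
      · have hlt : z < u := hzu.lt_of_ne hzequ
        obtain ⟨v, hzv, hvu⟩ := exists_le_covBy_of_lt' hlt
        have hvn : ht v ≤ n := by have := ht_covBy hvu; omega
        obtain ⟨w₀', hw1, hw2⟩ := (IH v hvn).2 z hz hzv
          (fun c hc hcv => hmax c hc (hcv.trans hvu.le))
        obtain ⟨t', ht'u, ht'v, ht'w⟩ := core_lemma hsp hvu hz hmax hw1 hw2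
        -- minimal t'' ≤ t' not below v
        have hwf : WellFounded ((· < ·) : L → L → Prop) := wellFounded_lt
        obtain ⟨t'', htm, htmin⟩ := hwf.has_min {s | s ≤ t' ∧ ¬ s ≤ v} ⟨t', le_rfl, ht'v⟩
        obtain ⟨ht''t', ht''nv⟩ := htm
        have hcoat : ∀ s, s < t'' → s ≤ v := by
          intro s hs
          by_contra hsv
          exact htmin s ⟨le_trans hs.le ht''t', hsv⟩ hs
        have ht''v : t'' ⊓ v ≤ w₀' := le_trans (inf_le_inf_right v ht''t') ht'w
        -- z ≠ ⊥
        have hzne : z ≠ ⊥ := by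
          intro hzb
          obtain ⟨c, hc, hcu, hcb⟩ := exists_cycle_not_le hsp
            (hlt.trans_le le_rfl).not_ge
          have h1 : ht c ≤ ht z := hmax c hc hcu
          rw [hzb, ht_bot] at h1
          have : c = ⊥ := (eq_of_le_of_ht_le (bot_le : (⊥:L) ≤ c)
            (by rw [ht_bot]; omega)).symm
          exact hcb (this.le.trans bot_le)
        obtain ⟨a, haz, hane, hamin⟩ := cycle_atom hz hzne
        set w₀ := w₀' ⊔ t'' with hw₀def
        have hzw₀ : z ⊓ w₀ = ⊥ := by
          by_contra hne
          have haw : a ≤ w₀ := le_trans (hamin (z ⊓ w₀) inf_le_left hne) inf_le_right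
          -- g-argument
          have hmod : (w₀' ⊔ t'') ⊓ (w₀' ⊔ a) = w₀' ⊔ (t'' ⊓ (w₀' ⊔ a)) :=
            sup_inf_assoc_of_le t'' le_sup_left
          have hwa_le : w₀' ⊔ a ≤ w₀' ⊔ t'' := sup_le le_sup_left haw
          have hga : w₀' ⊔ (t'' ⊓ (w₀' ⊔ a)) = w₀' ⊔ a := by
            rw [← hmod]
            exact inf_eq_right.mpr hwa_le
          set g := t'' ⊓ (w₀' ⊔ a) with hgdef
          by_cases hgv : g ≤ v
          · have hgw : g ≤ w₀' := le_trans (le_inf inf_le_left hgv) ht''v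
            have : w₀' ⊔ a = w₀' := by rw [← hga, sup_eq_left.mpr hgw]
            have haw' : a ≤ w₀' := le_trans le_sup_right this.le
            have : a ≤ z ⊓ w₀' := le_inf haz haw'
            rw [hw1] at this
            exact hane (le_bot_iff.mp this)
          · have hgt : g = t'' := by
              rcases lt_or_eq_of_le (inf_le_left : g ≤ t'') with h | h
              · exact absurd (hcoat g h) hgv
              · exact h
            have : t'' ≤ v := by
              calc t'' = g := hgt.symm
                _ ≤ w₀' ⊔ a := inf_le_right
                _ ≤ w₀' ⊔ z := sup_le le_sup_left (le_trans haz le_sup_right)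
                _ = v := by rw [sup_comm]; exact hw2
            exact ht''nv this
        have hzw₀sup : z ⊔ w₀ = u := by
          have h1 : z ⊔ w₀ = v ⊔ t'' := by
            rw [hw₀def, ← sup_assoc, hw2]
          have h2 : v < v ⊔ t'' := by
            rcases lt_or_eq_of_le (le_sup_left : v ≤ v ⊔ t'') with h | h
            · exact h
            · exfalso; exact ht''nv (le_trans le_sup_right h.symm.le)
          have h3 : v ⊔ t'' ≤ u := sup_le hvu.le (le_trans ht''t' ht'u)
          rcases hvu.eq_or_eq le_sup_left h3 with h | h
          · exact absurd h.symm h2.ne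
          · rw [h1, h]
        exact ⟨w₀, hzw₀, hzw₀sup⟩
    have htyped : ∃ μ, IsTypeOf u μ := by
      by_cases hub : u = ⊥
      · exact ⟨0, hub ▸ isTypeOf_bot⟩
      · obtain ⟨z, hz, hzu, hmax⟩ := exists_max_cycle u
        have hzne : z ≠ ⊥ := by
          intro hzb
          obtain ⟨c, hc, hcu, hcb⟩ := exists_cycle_not_le hsp
            (fun h : u ≤ ⊥ => hub (le_bot_iff.mp h))
          have h1 : ht c ≤ ht z := hmax c hc hcu
          rw [hzb, ht_bot] at h1
          have : c = ⊥ := (eq_of_le_of_ht_le (bot_le : (⊥:L) ≤ c)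
            (by rw [ht_bot]; omega)).symm
          exact hcb this.le
        obtain ⟨w₀, hw1, hw2⟩ := hcompl z hz hzu hmax
        have hA := ht_modular z w₀
        rw [hw1, hw2, ht_bot] at hA
        have hz1 : 1 ≤ ht z := by
          have := ht_strictMono (bot_lt_iff_ne_bot.mpr hzne)
          rw [ht_bot] at this; omega
        have hw₀n : ht w₀ ≤ n := by omega
        obtain ⟨μ, hμ⟩ := (IH w₀ hw₀n).1
        exact ⟨ht z ::ₘ μ, hw2 ▸ mergeType hz hzne hμ hw1⟩
    exact ⟨htyped, hcompl⟩

theorem exists_type (hsp : IsSemiPrimary L) (u : L) : ∃ μ, IsTypeOf u μ :=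
  (decomp_aux hsp (ht u) u le_rfl).1

end Decomp

section Enumer
attribute [local instance] Classical.propDecidable
set_option linter.unusedSectionVars false
set_option maxHeartbeats 1600000

variable {L : Type*} [Lattice L] [IsModularLattice L] [BoundedOrder L] [Fintype L]

lemma natCard_eq_filter (p : L → Prop) :
    Nat.card {w : L // p w} = (Finset.univ.filter p).card := by
  simp [Nat.card_eq_fintype_card, Fintype.card_subtype]

lemma filter_ext_univ {p q : L → Prop} (hp : DecidablePred p) (hq : DecidablePred q)
    (h : ∀ a, p a ↔ q a) :
    @Finset.filter L p hp Finset.univ = @Finset.filter L q hq Finset.univ := by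
  ext a
  simp only [Finset.mem_filter, Finset.mem_univ, true_and, h a]

lemma card_filter_ext {p q : L → Prop} {hp : DecidablePred p} {hq : DecidablePred q}
    (h : ∀ a, p a ↔ q a) :
    (@Finset.filter L p hp Finset.univ).card = (@Finset.filter L q hq Finset.univ).card :=
  congrArg Finset.card (filter_ext_univ hp hq h)

/-- number of elements of type ψ below y -/
noncomputable def aCnt (ψ : Multiset ℕ) (y : L) : ℕ :=
  Nat.card {w : L // IsTypeOf w ψ ∧ w ≤ y}

lemma aCnt_eq_filter (ψ : Multiset ℕ) (y : L) :
    aCnt ψ y = (Finset.univ.filter (fun w : L => IsTypeOf w ψ ∧ w ≤ y)).card := by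
  rw [aCnt, natCard_eq_filter]
  exact card_filter_ext (fun a => Iff.rfl)

lemma aCnt_const (hden : DownEnum L) {x x' : L} {ψ₀ : Multiset ℕ}
    (h1 : IsTypeOf x ψ₀) (h2 : IsTypeOf x' ψ₀) (ψ : Multiset ℕ) : aCnt ψ x = aCnt ψ x' :=
  hden x x' ψ₀ ψ h1 h2

lemma type_transfer (hden : DownEnum L) {y y' : L} {ψ₀ : Multiset ℕ}
    (h1 : IsTypeOf y ψ₀) (h2 : IsTypeOf y' ψ₀) {ψ : Multiset ℕ} (hyψ : IsTypeOf y ψ) :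
    IsTypeOf y' ψ := by
  have hcard := aCnt_const hden h1 h2 ψ
  rw [aCnt_eq_filter, aCnt_eq_filter] at hcard
  have hpos : 0 < (Finset.univ.filter (fun w : L => IsTypeOf w ψ ∧ w ≤ y)).card := by
    apply Finset.card_pos.mpr
    exact ⟨y, Finset.mem_filter.mpr ⟨Finset.mem_univ _, hyψ, le_rfl⟩⟩
  rw [hcard] at hpos
  obtain ⟨w, hw⟩ := Finset.card_pos.mp hpos
  rw [Finset.mem_filter] at hw
  obtain ⟨-, hwψ, hwy⟩ := hw
  have e1 : ht w = ψ.sum := ht_of_isTypeOf hwψ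
  have e2 : ht y = ψ.sum := ht_of_isTypeOf hyψ
  have e3 : ht y = ψ₀.sum := ht_of_isTypeOf h1
  have e4 : ht y' = ψ₀.sum := ht_of_isTypeOf h2
  have hwy' : w = y' := eq_of_le_of_ht_le hwy (by omega)
  exact hwy' ▸ hwψ

/-- canonical type representative via encoding -/
noncomputable def typeRep (y : L) : Multiset ℕ :=
  ((Encodable.decode (α := Multiset ℕ)
    (sInf {n | ∃ ψ : Multiset ℕ, IsTypeOf y ψ ∧ Encodable.encode ψ = n})).getD 0)

lemma typeRep_isType (hsp : IsSemiPrimary L) (y : L) : IsTypeOf y (typeRep y) := by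
  obtain ⟨μ, hμ⟩ := exists_type hsp y
  have hne : {n | ∃ ψ : Multiset ℕ, IsTypeOf y ψ ∧ Encodable.encode ψ = n}.Nonempty :=
    ⟨Encodable.encode μ, μ, hμ, rfl⟩
  obtain ⟨ψ, hψ, hψe⟩ := Nat.sInf_mem hne
  rw [typeRep, ← hψe, Encodable.encodek]
  exact hψ

lemma typeRep_const (hden : DownEnum L) {y y' : L} {ψ₀ : Multiset ℕ}
    (h1 : IsTypeOf y ψ₀) (h2 : IsTypeOf y' ψ₀) : typeRep y = typeRep y' := by
  have hset : {n | ∃ ψ : Multiset ℕ, IsTypeOf y ψ ∧ Encodable.encode ψ = n} =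
      {n | ∃ ψ : Multiset ℕ, IsTypeOf y' ψ ∧ Encodable.encode ψ = n} := by
    ext n
    constructor
    · rintro ⟨ψ, hψ, rfl⟩; exact ⟨ψ, type_transfer hden h1 h2 hψ, rfl⟩
    · rintro ⟨ψ, hψ, rfl⟩; exact ⟨ψ, type_transfer hden h2 h1 hψ, rfl⟩
  rw [typeRep, typeRep, hset]

/-- a partition is a "good representative" if it is the canonical type of its elements -/
def goodRep (L : Type*) [Lattice L] [IsModularLattice L] [BoundedOrder L] [Fintype L]
    (ψ : Multiset ℕ) : Prop :=
  ∃ y : L, IsTypeOf y ψ ∧ typeRep y = ψ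

lemma typeRep_eq_iff (hsp : IsSemiPrimary L) (hden : DownEnum L) (y : L) (ψ : Multiset ℕ) :
    typeRep y = ψ ↔ IsTypeOf y ψ ∧ goodRep L ψ := by
  constructor
  · intro h
    have h2 := typeRep_isType hsp y
    rw [h] at h2
    exact ⟨h2, y, h2, h⟩
  · rintro ⟨hy, y₀, hy₀, hrep₀⟩
    rw [typeRep_const hden hy hy₀]
    exact hrep₀

/-- well-defined α constant -/
noncomputable def alphaC (L : Type*) [Lattice L] [IsModularLattice L] [BoundedOrder L]
    [Fintype L] (ψ'' ψ : Multiset ℕ) : ℕ :=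
  if h : ∃ y : L, IsTypeOf y ψ'' then aCnt ψ (Classical.choose h) else 0

lemma alphaC_spec (hden : DownEnum L) {y : L} {ψ'' : Multiset ℕ} (hy : IsTypeOf y ψ'')
    (ψ : Multiset ℕ) : aCnt ψ y = alphaC L ψ'' ψ := by
  rw [alphaC, dif_pos ⟨y, hy⟩]
  exact aCnt_const hden hy (Classical.choose_spec (⟨y, hy⟩ : ∃ y : L, IsTypeOf y ψ'')) ψ

/-- number of elements of type φ above an element of type ψ -/
noncomputable def uC (L : Type*) [Lattice L] [IsModularLattice L] [BoundedOrder L]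
    [Fintype L] (φ ψ : Multiset ℕ) : ℕ :=
  if h : ∃ w : L, IsTypeOf w ψ then
    Nat.card {v : L // IsTypeOf v φ ∧ Classical.choose h ≤ v}
  else 0

lemma uC_spec (hupe : UpEnum L) {w : L} {ψ : Multiset ℕ} (hw : IsTypeOf w ψ)
    (φ : Multiset ℕ) : Nat.card {v : L // IsTypeOf v φ ∧ w ≤ v} = uC L φ ψ := by
  rw [uC, dif_pos ⟨w, hw⟩]
  exact hupe w (Classical.choose (⟨w, hw⟩ : ∃ w : L, IsTypeOf w ψ)) ψ φ hw
    (Classical.choose_spec (⟨w, hw⟩ : ∃ w : L, IsTypeOf w ψ))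

/-- count of v of type φ with x ⊓ v of type ψ -/
noncomputable def eCnt (φ ψ : Multiset ℕ) (x : L) : ℕ :=
  ((Finset.univ.filter (fun v : L => IsTypeOf v φ)).filter
    (fun v => IsTypeOf (x ⊓ v) ψ)).card

lemma aCnt_of_ht_le {ψ : Multiset ℕ} {y : L} (hy : ht y ≤ ψ.sum) :
    aCnt ψ y = if IsTypeOf y ψ then 1 else 0 := by
  rw [aCnt_eq_filter]
  have hsub : ∀ w : L, IsTypeOf w ψ → w ≤ y → w = y := by
    intro w hw hwy
    have e1 : ht w = ψ.sum := ht_of_isTypeOf hw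
    exact eq_of_le_of_ht_le hwy (by omega)
  by_cases hyt : IsTypeOf y ψ
  · rw [if_pos hyt]
    apply Finset.card_eq_one.mpr
    refine ⟨y, ?_⟩
    ext w
    simp only [Finset.mem_filter, Finset.mem_univ, true_and, Finset.mem_singleton]
    constructor
    · rintro ⟨hw, hwy⟩; exact hsub w hw hwy
    · rintro rfl; exact ⟨hyt, le_rfl⟩
  · rw [if_neg hyt]
    apply Finset.card_eq_zero.mpr
    apply Finset.filter_eq_empty_iff.mpr
    intro w _
    rintro ⟨hw, hwy⟩
    exact hyt ((hsub w hw hwy) ▸ hw)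

end Enumer

section Kmach
attribute [local instance] Classical.propDecidable
set_option linter.unusedSectionVars false
set_option maxHeartbeats 1600000

variable {L : Type*} [Lattice L] [IsModularLattice L] [BoundedOrder L] [Fintype L]

/-- the set of elements of type φ -/
noncomputable def Af {L : Type*} [Lattice L] [IsModularLattice L] [BoundedOrder L] [Fintype L]
    (φ : Multiset ℕ) : Finset L :=
  Finset.univ.filter (fun v : L => IsTypeOf v φ)

lemma mem_Af {φ : Multiset ℕ} {v : L} (h : v ∈ Af φ) : IsTypeOf v φ :=
  (Finset.mem_filter.mp h).2

lemma master (hupe : UpEnum L) (φ ψ : Multiset ℕ) (x : L) :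
    eCnt φ ψ x + ∑ v ∈ (Af φ).filter (fun v => ψ.sum + 1 ≤ ht (x ⊓ v)), aCnt ψ (x ⊓ v)
      = aCnt ψ x * uC L φ ψ := by
  have hswap : ∑ v ∈ Af φ, aCnt ψ (x ⊓ v) = aCnt ψ x * uC L φ ψ := by
    have hpt : ∀ v : L, aCnt ψ (x ⊓ v)
        = ∑ w ∈ Finset.univ.filter (fun w : L => IsTypeOf w ψ ∧ w ≤ x),
            (if w ≤ v then 1 else 0) := by
      intro v
      have h1 : aCnt ψ (x ⊓ v) =
          ((Finset.univ.filter (fun w : L => IsTypeOf w ψ ∧ w ≤ x)).filter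
            (fun w => w ≤ v)).card := by
        rw [aCnt_eq_filter, Finset.filter_filter]
        apply card_filter_ext
        intro w
        constructor
        · rintro ⟨hw, hwy⟩
          exact ⟨⟨hw, hwy.trans inf_le_left⟩, hwy.trans inf_le_right⟩
        · rintro ⟨⟨hw, hwx⟩, hwv⟩
          exact ⟨hw, le_inf hwx hwv⟩
      rw [h1, Finset.card_filter]
    calc ∑ v ∈ Af φ, aCnt ψ (x ⊓ v)
        = ∑ v ∈ Af φ, ∑ w ∈ Finset.univ.filter (fun w : L => IsTypeOf w ψ ∧ w ≤ x),
            (if w ≤ v then 1 else 0) := Finset.sum_congr rfl (fun v _ => hpt v)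
      _ = ∑ w ∈ Finset.univ.filter (fun w : L => IsTypeOf w ψ ∧ w ≤ x),
            ∑ v ∈ Af φ, (if w ≤ v then 1 else 0) := Finset.sum_comm
      _ = ∑ w ∈ Finset.univ.filter (fun w : L => IsTypeOf w ψ ∧ w ≤ x), uC L φ ψ := by
          apply Finset.sum_congr rfl
          intro w hw
          have hwψ : IsTypeOf w ψ := (Finset.mem_filter.mp hw).2.1
          rw [← Finset.card_filter]
          rw [← uC_spec hupe hwψ φ, natCard_eq_filter]
          rw [Af, Finset.filter_filter]
          apply card_filter_ext
          intro a
          exact Iff.rfl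
      _ = aCnt ψ x * uC L φ ψ := by
          rw [Finset.sum_const, smul_eq_mul, aCnt_eq_filter]
  have hsplit := Finset.sum_filter_add_sum_filter_not (Af φ)
    (fun v => ψ.sum + 1 ≤ ht (x ⊓ v)) (fun v => aCnt ψ (x ⊓ v))
  have hlow : ∑ v ∈ (Af φ).filter (fun v => ¬ (ψ.sum + 1 ≤ ht (x ⊓ v))),
      aCnt ψ (x ⊓ v) = eCnt φ ψ x := by
    have hlow1 : ∀ v ∈ (Af φ).filter (fun v => ¬ (ψ.sum + 1 ≤ ht (x ⊓ v))),
        aCnt ψ (x ⊓ v) = if IsTypeOf (x ⊓ v) ψ then 1 else 0 := by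
      intro v hv
      have := (Finset.mem_filter.mp hv).2
      exact aCnt_of_ht_le (by omega)
    rw [Finset.sum_congr rfl hlow1, ← Finset.card_filter]
    have hAf : Af (L := L) φ = Finset.univ.filter (fun v : L => IsTypeOf v φ) := rfl
    rw [eCnt, hAf]
    simp only [Finset.filter_filter]
    apply card_filter_ext
    intro v
    constructor
    · rintro ⟨⟨h1, -⟩, h3⟩; exact ⟨h1, h3⟩
    · rintro ⟨h1, h3⟩
      refine ⟨⟨h1, ?_⟩, h3⟩
      have := ht_of_isTypeOf h3
      omega
  rw [← hswap, ← hsplit, ← hlow]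
  exact Nat.add_comm _ _

lemma highsum (hsp : IsSemiPrimary L) (hden : DownEnum L) (φ ψ : Multiset ℕ) (x : L) :
    ∑ v ∈ (Af φ).filter (fun v => ψ.sum + 1 ≤ ht (x ⊓ v)), aCnt ψ (x ⊓ v)
      = ∑ ψ'' ∈ (Finset.univ.image (fun y : L => typeRep y)).filter
          (fun t => goodRep L t ∧ ψ.sum + 1 ≤ t.sum),
          eCnt φ ψ'' x * alphaC L ψ'' ψ := by
  have hmaps : ∀ v ∈ (Af φ).filter (fun v => ψ.sum + 1 ≤ ht (x ⊓ v)),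
      typeRep (x ⊓ v) ∈ (Finset.univ.image (fun y : L => typeRep y)).filter
        (fun t => goodRep L t ∧ ψ.sum + 1 ≤ t.sum) := by
    intro v hv
    have hh := (Finset.mem_filter.mp hv).2
    have htype := typeRep_isType hsp (x ⊓ v)
    refine Finset.mem_filter.mpr ⟨Finset.mem_image_of_mem _ (Finset.mem_univ _), ?_, ?_⟩
    · exact ⟨x ⊓ v, htype, rfl⟩
    · have := ht_of_isTypeOf htype
      omega
  rw [← Finset.sum_fiberwise_of_maps_to hmaps (fun v => aCnt ψ (x ⊓ v))]
  apply Finset.sum_congr rfl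
  intro ψ'' hψ''
  obtain ⟨-, hgood, hsum⟩ :
      ψ'' ∈ Finset.univ.image (fun y : L => typeRep y) ∧ goodRep L ψ'' ∧ ψ.sum + 1 ≤ ψ''.sum := by
    have := Finset.mem_filter.mp hψ''
    exact ⟨this.1, this.2.1, this.2.2⟩
  have hfib : ((Af φ).filter (fun v => ψ.sum + 1 ≤ ht (x ⊓ v))).filter
      (fun v => typeRep (x ⊓ v) = ψ'')
      = (Af φ).filter (fun v => IsTypeOf (x ⊓ v) ψ'') := by
    rw [Finset.filter_filter]
    apply Finset.filter_congr
    intro v _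
    constructor
    · rintro ⟨-, hrep⟩
      exact ((typeRep_eq_iff hsp hden _ _).mp hrep).1
    · intro htype
      refine ⟨?_, (typeRep_eq_iff hsp hden _ _).mpr ⟨htype, hgood⟩⟩
      have := ht_of_isTypeOf htype
      omega
  rw [hfib]
  have hconst : ∀ v ∈ (Af φ).filter (fun v => IsTypeOf (x ⊓ v) ψ''),
      aCnt ψ (x ⊓ v) = alphaC L ψ'' ψ := by
    intro v hv
    exact alphaC_spec hden ((Finset.mem_filter.mp hv).2) ψ
  rw [Finset.sum_congr rfl hconst, Finset.sum_const, smul_eq_mul]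
  rw [eCnt]
  rfl

lemma eCnt_const (hsp : IsSemiPrimary L) (hden : DownEnum L) (hupe : UpEnum L)
    (φ : Multiset ℕ) : ∀ (k : ℕ) (ψ : Multiset ℕ), ht (⊤ : L) + 1 ≤ ψ.sum + k →
    ∀ {x x' : L} {ψ₀ : Multiset ℕ}, IsTypeOf x ψ₀ → IsTypeOf x' ψ₀ →
    eCnt φ ψ x = eCnt φ ψ x' := by
  intro k
  induction k with
  | zero =>
    intro ψ hψ x x' ψ₀ h1 h2
    have hzero : ∀ y : L, eCnt φ ψ y = 0 := by
      intro y
      rw [eCnt]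
      apply Finset.card_eq_zero.mpr
      apply Finset.filter_eq_empty_iff.mpr
      intro v _
      intro htype
      have e1 := ht_of_isTypeOf htype
      have e2 : ht (y ⊓ v) ≤ ht (⊤ : L) := ht_mono le_top
      omega
    rw [hzero x, hzero x']
  | succ k IH =>
    intro ψ hψ x x' ψ₀ h1 h2
    have hm1 := master hupe φ ψ x
    have hm2 := master hupe φ ψ x'
    rw [highsum hsp hden φ ψ x] at hm1
    rw [highsum hsp hden φ ψ x'] at hm2
    have ha := aCnt_const hden h1 h2 ψ
    rw [ha] at hm1
    have hsum_eq : ∑ ψ'' ∈ (Finset.univ.image (fun y : L => typeRep y)).filter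
          (fun t => goodRep L t ∧ ψ.sum + 1 ≤ t.sum), eCnt φ ψ'' x * alphaC L ψ'' ψ
        = ∑ ψ'' ∈ (Finset.univ.image (fun y : L => typeRep y)).filter
          (fun t => goodRep L t ∧ ψ.sum + 1 ≤ t.sum), eCnt φ ψ'' x' * alphaC L ψ'' ψ := by
      apply Finset.sum_congr rfl
      intro ψ'' hψ''
      have hs : ψ.sum + 1 ≤ ψ''.sum := (Finset.mem_filter.mp hψ'').2.2
      rw [IH ψ'' (by omega) h1 h2]
    rw [hsum_eq] at hm1
    exact Nat.add_right_cancel (hm1.trans hm2.symm)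

lemma layer_const (hsp : IsSemiPrimary L) (hden : DownEnum L) (hupe : UpEnum L)
    (φ : Multiset ℕ) {x x' : L} {ψ₀ : Multiset ℕ}
    (h1 : IsTypeOf x ψ₀) (h2 : IsTypeOf x' ψ₀) (t : ℕ) :
    ((Af φ).filter (fun v => t ≤ ht (x ⊓ v))).card
      = ((Af φ).filter (fun v => t ≤ ht (x' ⊓ v))).card := by
  have key : ∀ y : L, IsTypeOf y ψ₀ →
      ((Af φ).filter (fun v => t ≤ ht (y ⊓ v))).card
        = ∑ ψ'' ∈ (Finset.univ.image (fun z : L => typeRep z)).filter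
            (fun s => goodRep L s ∧ t ≤ s.sum), eCnt φ ψ'' y := by
    intro y _
    have hmaps : ∀ v ∈ (Af φ).filter (fun v => t ≤ ht (y ⊓ v)),
        typeRep (y ⊓ v) ∈ (Finset.univ.image (fun z : L => typeRep z)).filter
          (fun s => goodRep L s ∧ t ≤ s.sum) := by
      intro v hv
      have hh := (Finset.mem_filter.mp hv).2
      have htype := typeRep_isType hsp (y ⊓ v)
      refine Finset.mem_filter.mpr ⟨Finset.mem_image_of_mem _ (Finset.mem_univ _), ?_, ?_⟩
      · exact ⟨y ⊓ v, htype, rfl⟩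
      · have := ht_of_isTypeOf htype
        omega
    rw [Finset.card_eq_sum_card_fiberwise hmaps]
    apply Finset.sum_congr rfl
    intro ψ'' hψ''
    obtain ⟨hgood, hsum⟩ : goodRep L ψ'' ∧ t ≤ ψ''.sum := (Finset.mem_filter.mp hψ'').2
    have hfib : ((Af φ).filter (fun v => t ≤ ht (y ⊓ v))).filter
        (fun v => typeRep (y ⊓ v) = ψ'')
        = (Af φ).filter (fun v => IsTypeOf (y ⊓ v) ψ'') := by
      rw [Finset.filter_filter]
      apply Finset.filter_congr
      intro v _
      constructor
      · rintro ⟨-, hrep⟩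
        exact ((typeRep_eq_iff hsp hden _ _).mp hrep).1
      · intro htype
        refine ⟨?_, (typeRep_eq_iff hsp hden _ _).mpr ⟨htype, hgood⟩⟩
        have := ht_of_isTypeOf htype
        omega
    rw [hfib]
    rfl
  rw [key x h1, key x' h2]
  apply Finset.sum_congr rfl
  intro ψ'' hψ''
  exact eCnt_const hsp hden hupe φ (ht (⊤ : L) + 1 - ψ''.sum) ψ'' (by omega) h1 h2

lemma sphere_const (hsp : IsSemiPrimary L) (hden : DownEnum L) (hupe : UpEnum L)
    (φ μ : Multiset ℕ) {x x' : L} (h1 : IsTypeOf x μ) (h2 : IsTypeOf x' μ) (r : ℕ) :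
    ((Af φ).filter (fun v => dLat x v ≤ r)).card
      = ((Af φ).filter (fun v => dLat x' v ≤ r)).card := by
  set T0 := (μ.sum + φ.sum - r + 1) / 2 with hT0
  have hiff : ∀ y : L, IsTypeOf y μ → ∀ v : L, IsTypeOf v φ →
      (dLat y v ≤ r ↔ T0 ≤ ht (y ⊓ v)) := by
    intro y hy v hv
    have hA := ht_modular y v
    have e1 : ht y = μ.sum := ht_of_isTypeOf hy
    have e2 : ht v = φ.sum := ht_of_isTypeOf hv
    rw [dLat]
    omega
  have hx : (Af φ).filter (fun v => dLat x v ≤ r)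
      = (Af φ).filter (fun v => T0 ≤ ht (x ⊓ v)) := by
    apply Finset.filter_congr
    intro v hv
    exact hiff x h1 v (mem_Af hv)
  have hx' : (Af φ).filter (fun v => dLat x' v ≤ r)
      = (Af φ).filter (fun v => T0 ≤ ht (x' ⊓ v)) := by
    apply Finset.filter_congr
    intro v hv
    exact hiff x' h2 v (mem_Af hv)
  rw [hx, hx']
  exact layer_const hsp hden hupe φ h1 h2 T0

end Kmach

section Final
attribute [local instance] Classical.propDecidable
set_option linter.unusedSectionVars false
set_option maxHeartbeats 1600000

/-- Sphere packing bound in a finite enumerable lattice: for a constant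
type code `C ⊆ L_μ` with minimum distance at least `D`, `r := ⌊(D−1)/2⌋`, and a partition
`φ` with `|S(u,r,φ)| > 0` for `u ∈ L_μ`, one has `|C| ≤ α(λ,φ) / |S(u,r,φ)|`, where
`λ = tp(L)` (so that `α(λ,φ)` is the number of elements of type `φ` below `⊤`). -/
theorem stmt15 {L : Type*} [Lattice L] [IsModularLattice L] [BoundedOrder L] [Fintype L]
    (hsp : IsSemiPrimary L) (hen : Enumerable L)
    (lam : Multiset ℕ) (hlam : IsTypeOf (⊤ : L) lam)
    (μ φ : Multiset ℕ) (hμ : IsPartition μ) (hφ : IsPartition φ)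
    (D : ℕ) (C : Set L) (hC : C ⊆ {v : L | IsTypeOf v μ})
    (hmin : ∀ u ∈ C, ∀ v ∈ C, u ≠ v → D ≤ dLat u v)
    (r : ℕ) (hr : r = (D - 1) / 2)
    (u : L) (hu : IsTypeOf u μ) (hpos : 0 < (sphT u r φ).ncard) :
    (C.ncard : ℝ) ≤
      ((Nat.card {w : L // IsTypeOf w φ ∧ w ≤ (⊤ : L)}) : ℝ) / ((sphT u r φ).ncard : ℝ) := by
  obtain ⟨hden, hupe⟩ := hen
  have hAfeq : Af (L := L) φ = Finset.univ.filter (fun v : L => IsTypeOf v φ) := rfl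
  have hN : Nat.card {w : L // IsTypeOf w φ ∧ w ≤ (⊤ : L)} = (Af (L := L) φ).card := by
    rw [natCard_eq_filter, hAfeq]
    exact card_filter_ext (fun a => by simp)
  have hSph : ∀ x : L, (sphT x r φ).ncard
      = ((Af (L := L) φ).filter (fun v => dLat x v ≤ r)).card := by
    intro x
    have h1 : (sphT x r φ).ncard = Nat.card {v : L // dLat x v ≤ r ∧ IsTypeOf v φ} :=
      (Nat.card_coe_set_eq _).symm
    rw [h1, natCard_eq_filter, hAfeq, Finset.filter_filter]
    exact card_filter_ext (fun a => and_comm)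
  set S := ((Af (L := L) φ).filter (fun v => dLat u v ≤ r)).card with hSdef
  have hSpos : 0 < S := by rw [hSdef, ← hSph u]; exact hpos
  have hCfin : C.Finite := Set.toFinite C
  have hCcard : C.ncard = hCfin.toFinset.card := Set.ncard_eq_toFinset_card C hCfin
  set CF := hCfin.toFinset with hCF
  have hdisj : ∀ c ∈ CF, ∀ c' ∈ CF, c ≠ c' →
      Disjoint ((Af (L := L) φ).filter (fun v => dLat c v ≤ r))
        ((Af (L := L) φ).filter (fun v => dLat c' v ≤ r)) := by
    intro c hc c' hc' hne
    rw [Finset.disjoint_left]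
    intro v hv hv'
    have h1 : dLat c v ≤ r := (Finset.mem_filter.mp hv).2
    have h2 : dLat c' v ≤ r := (Finset.mem_filter.mp hv').2
    have hcC : c ∈ C := hCfin.mem_toFinset.mp hc
    have hc'C : c' ∈ C := hCfin.mem_toFinset.mp hc'
    rcases Nat.eq_zero_or_pos D with hD | hD
    · apply hne
      have hr0 : r = 0 := by rw [hr, hD]
      have e1 : c = v := eq_of_dLat_eq_zero (by omega)
      have e2 : c' = v := eq_of_dLat_eq_zero (by omega)
      rw [e1, e2]
    · have htri := dLat_triangle c v c'
      have hsym : dLat v c' = dLat c' v := dLat_comm v c'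
      have hmin' := hmin c hcC c' hc'C hne
      omega
  have hsub : CF.biUnion (fun c => (Af (L := L) φ).filter (fun v => dLat c v ≤ r)) ⊆ Af (L := L) φ := by
    intro v hv
    obtain ⟨c, -, hv2⟩ := Finset.mem_biUnion.mp hv
    exact Finset.mem_of_mem_filter v hv2
  have hcount : CF.card * S ≤ (Af (L := L) φ).card := by
    have h1 : (CF.biUnion fun c => (Af (L := L) φ).filter (fun v => dLat c v ≤ r)).card
        = ∑ c ∈ CF, ((Af (L := L) φ).filter (fun v => dLat c v ≤ r)).card :=
      Finset.card_biUnion hdisj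
    have h2 : ∀ c ∈ CF, ((Af (L := L) φ).filter (fun v => dLat c v ≤ r)).card = S := by
      intro c hc
      exact sphere_const hsp hden hupe φ μ (hC (hCfin.mem_toFinset.mp hc)) hu r
    rw [Finset.sum_congr rfl h2, Finset.sum_const, smul_eq_mul] at h1
    calc CF.card * S = _ := h1.symm
      _ ≤ (Af (L := L) φ).card := Finset.card_le_card hsub
  rw [hN, hCcard, hSph u]
  rw [le_div_iff₀ (by exact_mod_cast hSpos)]
  exact_mod_cast hcount
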